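/- Let F be a field of characteristic ≠ 2 in which −1 is not a square. Then for any two distinct points P₁, P₂ ∈ F² there exists a non-isotropic line (a, b, c) (with a² + b² ≠ 0) such that the reflection of P₁ across (a, b, c) equals P₂. (Axiom (H-2): given two points, one can make a fold that places the first onto the second.) -/

import Mathlib

/-- The reflection of a point `P` across the line `a·x + b·y + c = 0`
(meaningful when the line is non-isotropic, i.e. `a² + b² ≠ 0`):
`refl P = P − (2(a·P₁ + b·P₂ + c)/(a² + b²))·(a, b)`. -/
def reflLine {F : Type*} [Field F] (a b c : F) (P : F × F) : F × F :=
  (P.1 - 2 * (a * P.1 + b * P.2 + c) / (a ^ 2 + b ^ 2) * a,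
   P.2 - 2 * (a * P.1 + b * P.2 + c) / (a ^ 2 + b ^ 2) * b)

/-- Over a field of characteristic ≠ 2 in which `-1` is not a square,
for any two distinct points there is a non-isotropic line reflecting the first
onto the second (axiom (H-2)). -/
theorem stmt_8 {F : Type*} [Field F] (hchar : (2 : F) ≠ 0)
    (hns : ¬ ∃ i : F, i ^ 2 = -1) :
    ∀ P₁ P₂ : F × F, P₁ ≠ P₂ →
      ∃ a b c : F, a ^ 2 + b ^ 2 ≠ 0 ∧ reflLine a b c P₁ = P₂ := by
  intro P₁ P₂ hne
  set a := P₁.1 - P₂.1 with ha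
  set b := P₁.2 - P₂.2 with hb
  have hab : ¬ (a = 0 ∧ b = 0) := by
    rintro ⟨h1, h2⟩
    apply hne
    have : P₁.1 = P₂.1 := by linear_combination h1
    have : P₁.2 = P₂.2 := by linear_combination h2
    exact Prod.ext ‹P₁.1 = P₂.1› ‹P₁.2 = P₂.2›
  have hden : a ^ 2 + b ^ 2 ≠ 0 := by
    intro h
    apply hab
    rcases eq_or_ne b 0 with hb0 | hb0
    · refine ⟨?_, hb0⟩
      have : a ^ 2 = 0 := by rw [hb0] at h; simpa using h
      exact pow_eq_zero_iff (by norm_num) |>.mp this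
    · exfalso
      exact hns ⟨a / b, by field_simp; linear_combination h⟩
  refine ⟨a, b, -(a * (P₁.1 + P₂.1) / 2 + b * (P₁.2 + P₂.2) / 2), hden, ?_⟩
  unfold reflLine
  refine Prod.ext ?_ ?_ <;> simp only [ha, hb] at hden ⊢ <;> field_simp <;> ring
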